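/- Bregman contraction of the Bregman projection: if Φ is Legendre and C is a closed convex set with C ∩ int(dom Φ) ≠ ∅, then for every y ∈ int(dom Φ), the Bregman projection p = argmin_{x∈C} D_Φ(x,y) is a singleton contained in int(dom Φ) ∩ C, and for every x ∈ dom Φ ∩ C it holds D_Φ(x, p) ≤ D_Φ(x, y) − D_Φ(p, y); in particular p is characterized by ⟨∇Φ(p) − ∇Φ(y), z − p⟩ ≥ 0 for all z ∈ C. -/

import Mathlib

open scoped RealInnerProductSpace
open Filter Set

/-- Bregman distance generated by `Φ` with gradient map `g`. -/
noncomputable def bregman {E : Type*} [NormedAddCommGroup E] [InnerProductSpace ℝ E]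
    (Φ : E → ℝ) (g : E → E) (x y : E) : ℝ :=
  Φ x - Φ y - ⟪g y, x - y⟫

/-- `Φ` (with domain `S` and gradient map `g` on `int S`) is a Legendre function:
proper (nonempty interior of the domain), convex and lower semicontinuous on `S`,
essentially smooth (differentiable on `int S` with gradient blow-up at the
boundary) and essentially strictly convex. -/
structure IsLegendre {E : Type*} [NormedAddCommGroup E] [InnerProductSpace ℝ E]
    [CompleteSpace E]
    (S : Set E) (Φ : E → ℝ) (g : E → E) : Prop where
  interior_nonempty : (interior S).Nonempty
  convexOn : ConvexOn ℝ S Φ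
  lsc : LowerSemicontinuousOn Φ S
  grad : ∀ x ∈ interior S, HasGradientAt Φ (g x) x
  strictConvexOn : StrictConvexOn ℝ (interior S) Φ
  ess_smooth : ∀ (u : ℕ → E) (zb : E), (∀ n, u n ∈ interior S) → zb ∈ frontier S →
    Filter.Tendsto u Filter.atTop (nhds zb) →
    Filter.Tendsto (fun n => ‖g (u n)‖) Filter.atTop Filter.atTop

lemma aux_line {E : Type*} [NormedAddCommGroup E] [InnerProductSpace ℝ E] [CompleteSpace E]
    {Φ : E → ℝ} {G x : E} (hG : HasGradientAt Φ G x) (v : E) :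
    HasDerivAt (fun t : ℝ => Φ (x + t • v)) ⟪G, v⟫ 0 := by
  have hγ : HasDerivAt (fun t : ℝ => x + t • v) v 0 := by
    simpa using ((hasDerivAt_id (0 : ℝ)).smul_const v).const_add x
  have h2 : HasFDerivAt Φ (InnerProductSpace.toDual ℝ E G) (x + (0:ℝ) • v) := by
    simpa using hG.hasFDerivAt
  simpa [InnerProductSpace.toDual_apply_apply, Function.comp_def] using h2.comp_hasDerivAt 0 hγ

lemma aux_subgrad {E : Type*} [NormedAddCommGroup E] [InnerProductSpace ℝ E] [CompleteSpace E]
    {S : Set E} {Φ : E → ℝ} (hconv : ConvexOn ℝ S Φ)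
    {x G : E} (hxS : x ∈ S) (hG : HasGradientAt Φ G x)
    {z : E} (hz : z ∈ S) : Φ x + ⟪G, z - x⟫ ≤ Φ z := by
  have hd := aux_line hG (z - x)
  have h1 := hasDerivAt_iff_tendsto_slope.1 hd
  have h2 : Tendsto (slope (fun t : ℝ => Φ (x + t • (z - x))) 0) (nhdsWithin 0 (Set.Ioi 0))
      (nhds ⟪G, z - x⟫) :=
    h1.mono_left (nhdsWithin_mono _ (fun t ht => by simpa using (ne_of_gt ht)))
  have hkey : ⟪G, z - x⟫ ≤ Φ z - Φ x := by
    refine le_of_tendsto h2 ?_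
    filter_upwards [Ioc_mem_nhdsGT_of_mem (by constructor <;> norm_num : (0:ℝ) ∈ Set.Ico 0 1)]
      with t ht
    have ht0 : (0:ℝ) < t := ht.1
    have hpt : x + t • (z - x) = (1 - t) • x + t • z := by module
    have hc := hconv.2 hxS hz (by linarith [ht.2] : (0:ℝ) ≤ 1 - t) ht0.le (by ring)
    rw [← hpt] at hc
    rw [slope_def_field]
    simp only [sub_zero, smul_eq_mul]
    rw [div_le_iff₀ ht0]
    simp only [zero_smul, add_zero]
    simp only [smul_eq_mul] at hc
    nlinarith [hc]
  linarith

set_option maxHeartbeats 1600000 in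
/-- Bregman contraction of the Bregman projection: if `Φ` is Legendre and `C` is
closed convex with `C ∩ int (dom Φ) ≠ ∅`, then for every `y ∈ int (dom Φ)` the
Bregman projection of `y` onto `C` is a singleton `p ∈ int (dom Φ) ∩ C`, it
satisfies `D_Φ(x, p) ≤ D_Φ(x, y) − D_Φ(p, y)` for every `x ∈ dom Φ ∩ C`, and it
is characterized by `⟨∇Φ(p) − ∇Φ(y), z − p⟩ ≥ 0` for all `z ∈ C`. -/
theorem stmt11 {E : Type*} [NormedAddCommGroup E] [InnerProductSpace ℝ E]
    [FiniteDimensional ℝ E]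
    (S : Set E) (Φ : E → ℝ) (g : E → E) (hleg : IsLegendre S Φ g)
    (C : Set E) (hCclosed : IsClosed C) (hCconv : Convex ℝ C)
    (hne : (C ∩ interior S).Nonempty)
    (y : E) (hy : y ∈ interior S) :
    ∃ p : E,
      (p ∈ C ∩ interior S ∧ ∀ x ∈ C ∩ S, bregman Φ g p y ≤ bregman Φ g x y) ∧
      (∀ x ∈ C ∩ S, bregman Φ g x p ≤ bregman Φ g x y - bregman Φ g p y) ∧
      (∀ z ∈ C, 0 ≤ ⟪g p - g y, z - p⟫) ∧
      (∀ q : E, q ∈ C ∩ S → (∀ x ∈ C ∩ S, bregman Φ g q y ≤ bregman Φ g x y) →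
        q = p) := by
  classical
  obtain ⟨y₀, hy₀C, hy₀I⟩ := hne
  have hSconv : Convex ℝ S := hleg.convexOn.1
  set f : E → ℝ := fun x => Φ x - ⟪g y, x⟫ with hfdef
  clear_value f
  have hyS : y ∈ S := interior_subset hy
  have hy₀S : y₀ ∈ S := interior_subset hy₀I
  -- convexity of f on S
  have fconv : ConvexOn ℝ S f := by
    refine ⟨hSconv, fun {u} hu {v} hv {a} {b} ha hb hab => ?_⟩
    have h1 := hleg.convexOn.2 hu hv ha hb hab
    simp only [hfdef, inner_add_right, inner_smul_right, smul_eq_mul] at h1 ⊢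
    nlinarith [h1]
  have fstrict : StrictConvexOn ℝ (interior S) f := by
    refine ⟨hSconv.interior, fun {u} hu {v} hv huv {a} {b} ha hb hab => ?_⟩
    have h1 := hleg.strictConvexOn.2 hu hv huv ha hb hab
    simp only [hfdef, inner_add_right, inner_smul_right, smul_eq_mul] at h1 ⊢
    nlinarith [h1]
  have fsub : ∀ x ∈ interior S, ∀ z ∈ S, f x + ⟪g x - g y, z - x⟫ ≤ f z := by
    intro x hx z hz
    have h := aux_subgrad hleg.convexOn (interior_subset hx) (hleg.grad x hx) hz
    simp only [hfdef, inner_sub_left, inner_sub_right] at *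
    linarith
  have flow : ∀ z ∈ S, f y ≤ f z := by
    intro z hz
    have := fsub y hy z hz
    simpa using this
  have fcont : ∀ x ∈ interior S, ContinuousAt f x := by
    intro x hx
    rw [hfdef]
    exact ((hleg.grad x hx).hasFDerivAt.continuousAt).sub
      ((continuous_const.inner continuous_id).continuousAt)
  -- infimum
  have hTne : (f '' (C ∩ S)).Nonempty := ⟨f y₀, ⟨y₀, ⟨hy₀C, hy₀S⟩, rfl⟩⟩
  have hTbdd : BddBelow (f '' (C ∩ S)) := by
    refine ⟨f y, ?_⟩
    rintro _ ⟨x, ⟨-, hxS⟩, rfl⟩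
    exact flow x hxS
  set μ := sInf (f '' (C ∩ S)) with hμdef
  clear_value μ
  have hμle : ∀ x, x ∈ C → x ∈ S → μ ≤ f x := by
    intro x hxC hxS
    rw [hμdef]
    exact csInf_le hTbdd ⟨x, ⟨hxC, hxS⟩, rfl⟩
  have hseq : ∀ n : ℕ, ∃ x, (x ∈ C ∧ x ∈ S) ∧ f x < μ + 1 / (n + 1) := by
    intro n
    have hlt : μ < μ + 1 / ((n : ℝ) + 1) := by
      have : (0:ℝ) < 1 / ((n : ℝ) + 1) := by positivity
      linarith
    rw [hμdef] at hlt
    obtain ⟨t, htT, htlt⟩ := exists_lt_of_csInf_lt hTne hlt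
    rw [← hμdef] at htlt
    obtain ⟨x, hx, rfl⟩ := htT
    exact ⟨x, ⟨hx.1, hx.2⟩, htlt⟩
  choose u hu hult using hseq
  -- boundedness of the minimizing sequence
  have hbdd : ∃ R, ∀ n, ‖u n‖ ≤ R := by
    by_contra hR
    push_neg at hR
    have hesc : ∀ j : ℕ, ∃ x, (x ∈ C ∧ x ∈ S) ∧ f x ≤ μ + 1 ∧ (j : ℝ) + ‖y‖ + 1 ≤ ‖x‖ := by
      intro j
      obtain ⟨n, hn⟩ := hR ((j : ℝ) + ‖y‖ + 1)
      refine ⟨u n, hu n, ?_, hn.le⟩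
      have h1 : 1 / ((n:ℝ) + 1) ≤ 1 := by
        rw [div_le_one (by positivity)]
        have : (0:ℝ) ≤ n := Nat.cast_nonneg n
        linarith
      linarith [hult n]
    choose x' hx' hfx' hnx' using hesc
    have htpos : ∀ j : ℕ, (j : ℝ) + 1 ≤ ‖x' j - y‖ := by
      intro j
      have h1 := norm_sub_norm_le (x' j) y
      linarith [hnx' j]
    have ht0 : ∀ j : ℕ, (0:ℝ) < ‖x' j - y‖ := fun j =>
      lt_of_lt_of_le (by positivity) (htpos j)
    set d : ℕ → E := fun j => (‖x' j - y‖)⁻¹ • (x' j - y) with hddef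
    clear_value d
    have hd1 : ∀ j, d j ∈ Metric.sphere (0:E) 1 := by
      intro j
      simp only [hddef, Metric.mem_sphere, dist_zero_right, norm_smul, norm_inv, norm_norm]
      exact inv_mul_cancel₀ (ht0 j).ne'
    obtain ⟨dl, hdl, k, hk, hdk⟩ := (isCompact_sphere (0:E) 1).tendsto_subseq hd1
    set β := max (f y) (μ + 1) with hβdef
    clear_value β
    have happ : ∀ c : ℝ, 0 ≤ c → ∀ j : ℕ, c ≤ ‖x' j - y‖ →
        (y + c • d j ∈ S ∧ f (y + c • d j) ≤ β) := by
      intro c hc j hcj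
      set s := c / ‖x' j - y‖ with hsdef
      have hs0 : 0 ≤ s := div_nonneg hc (ht0 j).le
      have hs1 : s ≤ 1 := (div_le_one (ht0 j)).2 hcj
      have hpt : y + c • d j = (1 - s) • y + s • x' j := by
        rw [hsdef, div_eq_mul_inv]
        simp only [hddef]
        match_scalars <;> ring
      constructor
      · rw [hpt]
        exact hSconv hyS (hx' j).2 (by linarith) hs0 (by ring)
      · rw [hpt]
        have hcc := fconv.2 hyS (hx' j).2 (by linarith : (0:ℝ) ≤ 1 - s) hs0 (by ring)
        have hb1 : f y ≤ β := by rw [hβdef]; exact le_max_left _ _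
        have hb2 : f (x' j) ≤ β := by
          rw [hβdef]
          exact le_trans (hfx' j) (le_max_right _ _)
        simp only [smul_eq_mul] at hcc
        nlinarith [hcc]
    have hevS : ∀ c : ℝ, ∀ᶠ n in atTop, c ≤ ‖x' (k n) - y‖ := by
      intro c
      filter_upwards [eventually_ge_atTop ⌈c⌉₊] with n hn
      calc c ≤ (⌈c⌉₊ : ℝ) := Nat.le_ceil c
        _ ≤ (n : ℝ) := by exact_mod_cast hn
        _ ≤ (k n : ℝ) := by exact_mod_cast hk.le_apply
        _ ≤ (k n : ℝ) + 1 := by linarith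
        _ ≤ ‖x' (k n) - y‖ := htpos (k n)
    have htnd : ∀ c : ℝ, Tendsto (fun n => y + c • d (k n)) atTop (nhds (y + c • dl)) := by
      intro c
      exact tendsto_const_nhds.add (hdk.const_smul c)
    have hcl : ∀ c : ℝ, 0 ≤ c → y + c • dl ∈ closure S := by
      intro c hc
      refine mem_closure_of_tendsto (htnd c) ?_
      filter_upwards [hevS c] with n hn using (happ c hc (k n) hn).1
    have hray : ∀ c : ℝ, 0 ≤ c → (y + c • dl ∈ interior S ∧ f (y + c • dl) ≤ β) := by
      intro c hc
      have hint : y + c • dl ∈ interior S := by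
        rcases eq_or_lt_of_le hc with h | h
        · simpa [← h] using hy
        · have h2 : y + (2 * c) • dl ∈ closure S := hcl _ (by linarith)
          have h3 := hSconv.combo_interior_closure_mem_interior hy h2
            (by norm_num : (0:ℝ) < 1/2) (by norm_num : (0:ℝ) ≤ 1/2) (by norm_num)
          have h4 : (1/2 : ℝ) • y + (1/2 : ℝ) • (y + (2 * c) • dl) = y + c • dl := by
            match_scalars <;> ring
          rwa [h4] at h3
      refine ⟨hint, ?_⟩
      have hc2 := (fcont _ hint).tendsto.comp (htnd c)
      refine le_of_tendsto hc2 ?_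
      filter_upwards [hevS c] with n hn using (happ c hc (k n) hn).2
    have hdlne : dl ≠ 0 := by
      intro h
      rw [h] at hdl
      simp at hdl
    have hm01 : f y ≤ f (y + (1:ℝ) • dl) := flow _ (interior_subset (hray 1 (by norm_num)).1)
    have hyne : y ≠ y + (2:ℝ) • dl := by
      intro h
      apply hdlne
      have h2 : (2:ℝ) • dl = 0 := by
        have h3 := h.symm
        rwa [add_eq_left] at h3
      simpa using (smul_eq_zero.1 h2).resolve_left (by norm_num)
    have hstr := fstrict.2 hy (hray 2 (by norm_num)).1 hyne
      (by norm_num : (0:ℝ) < 1/2) (by norm_num : (0:ℝ) < 1/2) (by norm_num)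
    have hmid : (1/2 : ℝ) • y + (1/2 : ℝ) • (y + (2:ℝ) • dl) = y + (1:ℝ) • dl := by
      match_scalars <;> ring
    rw [hmid] at hstr
    simp only [smul_eq_mul] at hstr
    set m1 := f (y + (1:ℝ) • dl) with hm1
    set m2 := f (y + (2:ℝ) • dl) with hm2
    have hδ : 0 < m2 - m1 := by nlinarith [hstr, hm01]
    have hm1β : m1 ≤ β := (hray 1 (by norm_num)).2
    set Tl := 2 + (β + 1 - m1) / (m2 - m1) with hTldef
    clear_value Tl
    have hfrac : 0 < (β + 1 - m1) / (m2 - m1) := div_pos (by linarith) hδ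
    have hT2 : 2 < Tl := by rw [hTldef]; linarith
    have hTl1 : (0:ℝ) < Tl - 1 := by linarith
    set sθ := 1 / (Tl - 1) with hsθdef
    clear_value sθ
    have hsθ0 : 0 < sθ := by rw [hsθdef]; exact one_div_pos.2 hTl1
    have hsθ1 : sθ ≤ 1 := by rw [hsθdef, div_le_one hTl1]; linarith
    have hsθmul : sθ * (Tl - 1) = 1 := by rw [hsθdef]; field_simp
    have hcomb := fconv.2 (interior_subset (hray 1 (by norm_num)).1)
      (interior_subset (hray Tl (by linarith)).1)
      (by linarith : (0:ℝ) ≤ 1 - sθ) hsθ0.le (by ring)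
    have hpt2 : (1 - sθ) • (y + (1:ℝ) • dl) + sθ • (y + Tl • dl)
        = y + (2:ℝ) • dl := by
      match_scalars
      all_goals first | ring1 | linear_combination hsθmul
    rw [hpt2] at hcomb
    simp only [smul_eq_mul] at hcomb
    have hmT : f (y + Tl • dl) ≤ β := (hray Tl (by linarith)).2
    have hkey : (Tl - 1) * (m2 - m1) = (m2 - m1) + (β + 1 - m1) := by
      rw [hTldef]
      field_simp
      ring
    have h5 : m2 - m1 ≤ sθ * (f (y + Tl • dl) - m1) := by nlinarith [hcomb]
    have h6 : (Tl - 1) * (m2 - m1) ≤ f (y + Tl • dl) - m1 := by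
      calc (Tl - 1) * (m2 - m1) ≤ (Tl - 1) * (sθ * (f (y + Tl • dl) - m1)) :=
            mul_le_mul_of_nonneg_left h5 hTl1.le
        _ = (sθ * (Tl - 1)) * (f (y + Tl • dl) - m1) := by ring
        _ = f (y + Tl • dl) - m1 := by rw [hsθmul]; ring
    linarith [h6, hkey, hδ, hmT]
  -- convergent subsequence of the minimizing sequence
  obtain ⟨R, hR⟩ := hbdd
  have hucb : ∀ n, u n ∈ Metric.closedBall (0:E) R := by
    intro n
    simpa [Metric.mem_closedBall, dist_zero_right] using hR n
  obtain ⟨pb, hpbball, k, hk, hconv_u⟩ := (isCompact_closedBall (0:E) R).tendsto_subseq hucb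
  have hpbC : pb ∈ C := hCclosed.mem_of_tendsto hconv_u (Eventually.of_forall fun n => (hu (k n)).1)
  have hpbcl : pb ∈ closure S :=
    mem_closure_of_tendsto hconv_u (Eventually.of_forall fun n => (hu (k n)).2)
  have hupper : Tendsto (fun n => μ + 1 / ((k n : ℝ) + 1)) atTop (nhds (μ + 0)) :=
    tendsto_const_nhds.add (tendsto_one_div_add_atTop_nhds_zero_nat.comp hk.tendsto_atTop)
  rw [add_zero] at hupper
  have hfmu : Tendsto (fun n => f (u (k n))) atTop (nhds μ) := by
    refine tendsto_of_tendsto_of_tendsto_of_le_of_le tendsto_const_nhds hupper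
      (fun n => hμle _ (hu (k n)).1 (hu (k n)).2) (fun n => (hult (k n)).le)
  -- existence of an interior minimizer
  have hex : ∃ p, (p ∈ C ∧ p ∈ interior S) ∧ ∀ x, x ∈ C → x ∈ S → f p ≤ f x := by
    by_cases hpI : pb ∈ interior S
    · refine ⟨pb, ⟨hpbC, hpI⟩, fun x hxC hxS => ?_⟩
      have hval : f pb = μ :=
        tendsto_nhds_unique ((fcont _ hpI).tendsto.comp hconv_u) hfmu
      rw [hval]
      exact hμle x hxC hxS
    · exfalso
      have hfr : pb ∈ frontier S := ⟨hpbcl, hpI⟩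
      set w : ℝ → E := fun lam => pb + lam • (y₀ - pb) with hwdef
      clear_value w
      have hwI : ∀ lam : ℝ, 0 < lam → lam ≤ 1 → w lam ∈ interior S := by
        intro lam h0 h1
        have h3 := hSconv.combo_interior_closure_mem_interior hy₀I hpbcl h0
          (by linarith : (0:ℝ) ≤ 1 - lam) (by ring)
        have h4 : lam • y₀ + (1 - lam) • pb = w lam := by
          simp only [hwdef]
          match_scalars <;> ring
        rwa [h4] at h3
      have hwC : ∀ lam : ℝ, 0 ≤ lam → lam ≤ 1 → w lam ∈ C := by
        intro lam h0 h1
        have h3 := hCconv hpbC hy₀C (by linarith : (0:ℝ) ≤ 1 - lam) h0 (by ring)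
        have h4 : (1 - lam) • pb + lam • y₀ = w lam := by
          simp only [hwdef]
          match_scalars <;> ring
        rwa [h4] at h3
      have hwlow : ∀ lam : ℝ, 0 < lam → lam ≤ 1 → μ ≤ f (w lam) := fun lam h0 h1 =>
        hμle _ (hwC lam h0.le h1) (interior_subset (hwI lam h0 h1))
      set K := f y₀ - μ with hKdef
      clear_value K
      have hK0 : 0 ≤ K := by
        have := hμle y₀ hy₀C hy₀S
        rw [hKdef]; linarith
      have hwup : ∀ lam : ℝ, 0 < lam → lam ≤ 1 → f (w lam) ≤ μ + lam * K := by
        intro lam h0 h1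
        have hcn : Tendsto (fun n => (1 - lam) • u (k n) + lam • y₀) atTop
            (nhds ((1 - lam) • pb + lam • y₀)) :=
          (hconv_u.const_smul (1 - lam)).add tendsto_const_nhds
        have h4 : (1 - lam) • pb + lam • y₀ = w lam := by
          simp only [hwdef]
          match_scalars <;> ring
        rw [h4] at hcn
        have hfle : ∀ n, f ((1 - lam) • u (k n) + lam • y₀)
            ≤ (1 - lam) * f (u (k n)) + lam * f y₀ := by
          intro n
          have := fconv.2 (hu (k n)).2 hy₀S (by linarith : (0:ℝ) ≤ 1 - lam) h0.le (by ring)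
          simpa [smul_eq_mul] using this
        have hl1 : Tendsto (fun n => f ((1 - lam) • u (k n) + lam • y₀)) atTop
            (nhds (f (w lam))) := by
          have := (fcont _ (hwI lam h0 h1)).tendsto.comp hcn
          exact this
        have hl2 : Tendsto (fun n => (1 - lam) * f (u (k n)) + lam * f y₀) atTop
            (nhds ((1 - lam) * μ + lam * f y₀)) :=
          (hfmu.const_mul _).add tendsto_const_nhds
        have := le_of_tendsto_of_tendsto' hl1 hl2 hfle
        rw [hKdef]; linarith
      obtain ⟨ε, hε0, hball⟩ := Metric.isOpen_iff.1 isOpen_interior y₀ hy₀I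
      set r := ε / 4 with hrdef
      clear_value r
      have hr0 : 0 < r := by rw [hrdef]; positivity
      have hball3 : Metric.closedBall y₀ (3 * r) ⊆ interior S := by
        intro x hx
        apply hball
        rw [Metric.mem_closedBall] at hx
        rw [Metric.mem_ball]
        rw [hrdef] at hx
        linarith
      have hΦcont : ContinuousOn Φ (Metric.closedBall y₀ (3 * r)) := fun x hx =>
        ((hleg.grad x (hball3 hx)).hasFDerivAt.continuousAt).continuousWithinAt
      obtain ⟨M, hM⟩ := (isCompact_closedBall y₀ (3 * r)).exists_bound_of_continuousOn hΦcont
      have hM0 : 0 ≤ M :=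
        le_trans (norm_nonneg _) (hM y₀ (by simp [Metric.mem_closedBall]; positivity))
      set B := ‖g y‖ with hBdef
      clear_value B
      have hB0 : 0 ≤ B := by rw [hBdef]; exact norm_nonneg _
      set C₁ := (4/3) * |μ| + K + 2 * r * B + (4/3) * ((‖y₀‖ + 3 * r) * B) + (4/3) * M
        with hC₁def
      clear_value C₁
      have hC₁0 : 0 ≤ C₁ := by
        rw [hC₁def]
        have h1 : (0:ℝ) ≤ |μ| := abs_nonneg μ
        have h2 : (0:ℝ) ≤ ‖y₀‖ := norm_nonneg _
        nlinarith [hK0, hM0, hB0, hr0]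
      have hgb : ∀ s : ℝ, 0 < s → s ≤ 1/4 → ‖g (w (2 * s))‖ ≤ C₁ / (2 * r) := by
        intro s hs0 hs4
        have h2s0 : (0:ℝ) < 2 * s := by linarith
        have h2s1 : 2 * s ≤ 1 := by linarith
        have hWI : w (2 * s) ∈ interior S := hwI _ h2s0 h2s1
        have h1s : (0:ℝ) < 1 - s := by linarith
        have h1s' : (1:ℝ) - s ≠ 0 := ne_of_gt h1s
        have key : ∀ uv : E, ‖uv‖ = 1 → ⟪g (w (2 * s)), uv⟫ * (2 * r) ≤ C₁ := by
          intro uv huv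
          set θ := (1 - 2 * s) / (1 - s) with hθdef
          clear_value θ
          have hθ0 : 0 ≤ θ := by
            rw [hθdef]
            exact div_nonneg (by linarith) h1s.le
          have hθ1 : θ ≤ 1 := by
            rw [hθdef]
            exact (div_le_one h1s).2 (by linarith)
          have h1θ0 : 0 ≤ 1 - θ := by linarith
          have h1θle : 1 - θ ≤ (4/3) * s := by
            have h1θeq : 1 - θ = s / (1 - s) := by
              rw [hθdef]
              field_simp
              ring
            rw [h1θeq, div_le_iff₀ h1s]
            nlinarith
          set z := y₀ + ((2 - 2 * s) * r) • uv with hzdef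
          clear_value z
          have hzball : z ∈ Metric.closedBall y₀ (3 * r) := by
            rw [hzdef, Metric.mem_closedBall, dist_eq_norm]
            simp only [add_sub_cancel_left]
            rw [norm_smul, huv, mul_one, Real.norm_eq_abs, abs_of_nonneg (by nlinarith)]
            nlinarith
          have hzI : z ∈ interior S := hball3 hzball
          have hzS : z ∈ S := interior_subset hzI
          have hAI : w s ∈ interior S := hwI s hs0 (by linarith)
          have hAS : w s ∈ S := interior_subset hAI
          have hWS : w (2 * s) ∈ S := interior_subset hWI
          have hqid : w (2 * s) + ((2 * s) * r) • uv = θ • w s + (1 - θ) • z := by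
            rw [hθdef, hzdef]
            simp only [hwdef]
            match_scalars <;> field_simp <;> ring
          have hqS : w (2 * s) + ((2 * s) * r) • uv ∈ S := by
            rw [hqid]
            exact hSconv hAS hzS hθ0 h1θ0 (by ring)
          have hsub := aux_subgrad hleg.convexOn hWS (hleg.grad _ hWI) hqS
          rw [add_sub_cancel_left, real_inner_smul_right] at hsub
          have hΦz : Φ z ≤ M := by
            have h := hM z hzball
            rw [Real.norm_eq_abs] at h
            linarith [le_abs_self (Φ z)]
          have hΦq : Φ (w (2 * s) + ((2 * s) * r) • uv) ≤ θ * Φ (w s) + (1 - θ) * M := by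
            have hc := hleg.convexOn.2 hAS hzS hθ0 h1θ0 (by ring)
            rw [← hqid] at hc
            simp only [smul_eq_mul] at hc
            nlinarith [hc, hΦz]
          have hfA : Φ (w s) = f (w s) + ⟪g y, w s⟫ := by simp [hfdef]
          have hfW : Φ (w (2 * s)) = f (w (2 * s)) + ⟪g y, w (2 * s)⟫ := by simp [hfdef]
          have hAup : f (w s) ≤ μ + s * K := hwup s hs0 (by linarith)
          have hWlow : μ ≤ f (w (2 * s)) := hwlow _ h2s0 h2s1
          have hshift : θ • w s - w (2 * s) = ((2 * s) * r) • uv - (1 - θ) • z := by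
            rw [hθdef, hzdef]
            simp only [hwdef]
            match_scalars <;> field_simp <;> ring
          have hlin : ⟪g y, θ • w s - w (2 * s)⟫ = θ * ⟪g y, w s⟫ - ⟪g y, w (2 * s)⟫ := by
            rw [inner_sub_right, real_inner_smul_right]
          have hgy1 : θ * ⟪g y, w s⟫ - ⟪g y, w (2 * s)⟫
              ≤ (2 * s) * r * B + (1 - θ) * ((‖y₀‖ + 3 * r) * B) := by
            rw [← hlin, hshift, inner_sub_right, real_inner_smul_right, real_inner_smul_right]
            have e1 : ⟪g y, uv⟫ ≤ B := by
              rw [hBdef]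
              have h := abs_real_inner_le_norm (g y) uv
              rw [huv, mul_one] at h
              exact le_trans (le_abs_self _) h
            have hz3 : ‖z‖ ≤ ‖y₀‖ + 3 * r := by
              rw [hzdef]
              refine le_trans (norm_add_le _ _) ?_
              rw [norm_smul, huv, mul_one, Real.norm_eq_abs, abs_of_nonneg (by nlinarith)]
              nlinarith
            have e2 : -((‖y₀‖ + 3 * r) * B) ≤ ⟪g y, z⟫ := by
              have h := abs_real_inner_le_norm (g y) z
              have h2 := neg_abs_le (⟪g y, z⟫ : ℝ)
              have h3 : ‖g y‖ * ‖z‖ ≤ B * (‖y₀‖ + 3 * r) := by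
                rw [hBdef]
                exact mul_le_mul_of_nonneg_left hz3 (norm_nonneg _)
              nlinarith
            have hsr : (0:ℝ) ≤ 2 * s * r := by positivity
            nlinarith [mul_le_mul_of_nonneg_left e1 hsr, mul_le_mul_of_nonneg_left e2 h1θ0]
          -- put the pieces together
          have hb1 : θ * f (w s) ≤ θ * μ + θ * (s * K) := by
            nlinarith [mul_le_mul_of_nonneg_left hAup hθ0]
          have hb2 : -((1 - θ) * μ) ≤ (1 - θ) * |μ| := by
            nlinarith [neg_abs_le μ, h1θ0]
          have hb3 : θ * (s * K) ≤ s * K := by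
            have hsK : 0 ≤ s * K := mul_nonneg hs0.le hK0
            calc θ * (s * K) ≤ 1 * (s * K) := mul_le_mul_of_nonneg_right hθ1 hsK
              _ = s * K := one_mul _
          have hb4 : (1 - θ) * |μ| ≤ (4/3) * s * |μ| :=
            mul_le_mul_of_nonneg_right h1θle (abs_nonneg μ)
          have hb5 : (1 - θ) * ((‖y₀‖ + 3 * r) * B) ≤ (4/3) * s * ((‖y₀‖ + 3 * r) * B) := by
            refine mul_le_mul_of_nonneg_right h1θle ?_
            positivity
          have hb6 : (1 - θ) * M ≤ (4/3) * s * M := mul_le_mul_of_nonneg_right h1θle hM0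
          have hθμ : θ * μ = μ - (1 - θ) * μ := by ring
          have hfinal : ((2 * s) * r) * ⟪g (w (2 * s)), uv⟫ ≤ s * C₁ := by
            rw [hC₁def]
            rw [hfW] at hsub
            rw [hfA] at hΦq
            linarith [hsub, hΦq, hgy1, hb1, hb2, hb3, hb4, hb5, hb6, hWlow, hθμ]
          have hring : s * (⟪g (w (2 * s)), uv⟫ * (2 * r)) = ((2 * s) * r) * ⟪g (w (2 * s)), uv⟫ := by
            ring
          have : s * (⟪g (w (2 * s)), uv⟫ * (2 * r)) ≤ s * C₁ := by rw [hring]; exact hfinal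
          exact le_of_mul_le_mul_left this hs0
        rcases eq_or_ne (g (w (2 * s))) 0 with h0 | h0
        · rw [h0, norm_zero]
          exact div_nonneg hC₁0 (by linarith)
        · have hgW : (0:ℝ) < ‖g (w (2 * s))‖ := norm_pos_iff.2 h0
          have hu1 : ‖(‖g (w (2 * s))‖)⁻¹ • g (w (2 * s))‖ = 1 := by
            rw [norm_smul, norm_inv, norm_norm]
            field_simp
          have hk1 := key _ hu1
          rw [real_inner_smul_right, real_inner_self_eq_norm_sq] at hk1
          have heq : (‖g (w (2 * s))‖)⁻¹ * ‖g (w (2 * s))‖ ^ 2 = ‖g (w (2 * s))‖ := by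
            field_simp
          rw [heq] at hk1
          rw [le_div_iff₀ (by linarith : (0:ℝ) < 2 * r)]
          exact hk1
      -- contradiction with essential smoothness
      have hlam0 : ∀ n : ℕ, (0:ℝ) < (1/8) * (1 / ((n:ℝ) + 1)) := by
        intro n; positivity
      have hlam4 : ∀ n : ℕ, (1/8) * (1 / ((n:ℝ) + 1)) ≤ 1/4 := by
        intro n
        have h1 : 1 / ((n:ℝ) + 1) ≤ 1 := by
          rw [div_le_one (by positivity)]
          linarith [(Nat.cast_nonneg n : (0:ℝ) ≤ (n:ℝ))]
        nlinarith
      have hunI : ∀ n : ℕ, w (2 * ((1/8) * (1 / ((n:ℝ) + 1)))) ∈ interior S := fun n =>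
        hwI _ (by linarith [hlam0 n]) (by linarith [hlam4 n])
      have htend : Tendsto (fun n : ℕ => w (2 * ((1/8) * (1 / ((n:ℝ) + 1))))) atTop
          (nhds pb) := by
        have h1 : Tendsto (fun n : ℕ => 2 * ((1/8) * (1 / ((n:ℝ) + 1)))) atTop (nhds 0) := by
          have h2 := tendsto_one_div_add_atTop_nhds_zero_nat.const_mul (2 * (1/8 : ℝ))
          simp only [mul_zero] at h2
          have h3 : (fun n : ℕ => 2 * (1/8 : ℝ) * (1 / ((n:ℝ) + 1)))
              = fun n : ℕ => 2 * ((1/8) * (1 / ((n:ℝ) + 1))) := by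
            funext n; ring
          rwa [h3] at h2
        have h2 := (h1.smul_const (y₀ - pb)).const_add pb
        simp only [hwdef]
        simpa using h2
      have hblow := hleg.ess_smooth _ pb hunI hfr htend
      obtain ⟨n, hn⟩ := (hblow.eventually_gt_atTop (C₁ / (2 * r))).exists
      exact absurd (hgb _ (hlam0 n) (hlam4 n)) (not_le.2 hn)
  -- final assembly
  obtain ⟨p, ⟨hpC, hpI⟩, hpmin⟩ := hex
  have hpS : p ∈ S := interior_subset hpI
  have hbf : ∀ a b : E, bregman Φ g a y - bregman Φ g b y = f a - f b := by
    intro a b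
    simp only [bregman, hfdef, inner_sub_right]
    ring
  -- variational inequality
  have hVI : ∀ z ∈ C, 0 ≤ ⟪g p - g y, z - p⟫ := by
    intro z hzC
    rcases eq_or_ne z p with rfl | hzp
    · simp
    obtain ⟨ε, hε0, hball⟩ := Metric.isOpen_iff.1 isOpen_interior p hpI
    have h2 : HasDerivAt (fun t : ℝ => ⟪g y, p + t • (z - p)⟫) ⟪g y, z - p⟫ 0 := by
      have heq : (fun t : ℝ => (⟪g y, p + t • (z - p)⟫ : ℝ))
          = fun t : ℝ => ⟪g y, p⟫ + t * ⟪g y, z - p⟫ := by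
        funext t
        rw [inner_add_right, real_inner_smul_right]
      rw [heq]
      simpa using ((hasDerivAt_id (0:ℝ)).mul_const (⟪g y, z - p⟫ : ℝ)).const_add
        (⟪g y, p⟫ : ℝ)
    have hℓ : HasDerivAt (fun t : ℝ => f (p + t • (z - p))) ⟪g p - g y, z - p⟫ 0 := by
      have h1 := aux_line (hleg.grad p hpI) (z - p)
      have h3 := h1.sub h2
      simp only [hfdef]
      rw [inner_sub_left]
      exact h3
    have hslope := hasDerivAt_iff_tendsto_slope.1 hℓ
    have hsl2 : Tendsto (slope (fun t : ℝ => f (p + t • (z - p))) 0)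
        (nhdsWithin 0 (Set.Ioi 0)) (nhds ⟪g p - g y, z - p⟫) :=
      hslope.mono_left (nhdsWithin_mono _ (fun t ht => by simpa using ne_of_gt ht))
    refine ge_of_tendsto hsl2 ?_
    have hzpn : (0:ℝ) < ‖z - p‖ := by
      rw [norm_pos_iff]
      exact sub_ne_zero.2 hzp
    have ht₀0 : 0 < min 1 (ε / (2 * ‖z - p‖)) := lt_min one_pos (by positivity)
    filter_upwards [Ioc_mem_nhdsGT_of_mem
      (⟨le_refl 0, ht₀0⟩ : (0:ℝ) ∈ Set.Ico 0 (min 1 (ε / (2 * ‖z - p‖))))] with t ht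
    have ht1 : t ≤ 1 := le_trans ht.2 (min_le_left _ _)
    have ht2 : t ≤ ε / (2 * ‖z - p‖) := le_trans ht.2 (min_le_right _ _)
    have htS : p + t • (z - p) ∈ S := by
      apply interior_subset
      apply hball
      rw [Metric.mem_ball, dist_eq_norm]
      simp only [add_sub_cancel_left]
      rw [norm_smul, Real.norm_eq_abs, abs_of_pos ht.1]
      have h4 : t * ‖z - p‖ ≤ (ε / (2 * ‖z - p‖)) * ‖z - p‖ :=
        mul_le_mul_of_nonneg_right ht2 hzpn.le
      have h5 : (ε / (2 * ‖z - p‖)) * ‖z - p‖ = ε / 2 := by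
        field_simp
      linarith
    have htC : p + t • (z - p) ∈ C := by
      have h6 := hCconv hpC hzC (by linarith : (0:ℝ) ≤ 1 - t) ht.1.le (by ring)
      have h7 : (1 - t) • p + t • z = p + t • (z - p) := by
        match_scalars <;> ring
      rwa [h7] at h6
    have hge := hpmin _ htC htS
    rw [slope_def_field]
    simp only [sub_zero, zero_smul, add_zero]
    exact div_nonneg (by linarith) ht.1.le
  -- contraction inequality
  have hcontr : ∀ x, x ∈ C → x ∈ S →
      bregman Φ g x p ≤ bregman Φ g x y - bregman Φ g p y := by
    intro x hxC hxS
    have h := hVI x hxC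
    simp only [inner_sub_left, inner_sub_right] at h
    simp only [bregman, inner_sub_right]
    linarith
  -- uniqueness
  have huniq : ∀ q : E, q ∈ C ∩ S → (∀ x ∈ C ∩ S, bregman Φ g q y ≤ bregman Φ g x y) →
      q = p := by
    rintro q ⟨hqC, hqS⟩ hqmin
    by_contra hqp
    have h1 : f q ≤ f p := by
      have h2 := hqmin p ⟨hpC, hpS⟩
      have h3 := hbf q p
      linarith
    have h2 : f p ≤ f q := hpmin q hqC hqS
    have hm1C : (1/2 : ℝ) • p + (1/2 : ℝ) • q ∈ C :=
      hCconv hpC hqC (by norm_num) (by norm_num) (by norm_num)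
    have hm1I : (1/2 : ℝ) • p + (1/2 : ℝ) • q ∈ interior S :=
      hSconv.combo_interior_closure_mem_interior hpI (subset_closure hqS)
        (by norm_num) (by norm_num) (by norm_num)
    have hm1f : f ((1/2 : ℝ) • p + (1/2 : ℝ) • q) ≤ f p := by
      have h3 := fconv.2 hpS hqS (by norm_num : (0:ℝ) ≤ 1/2) (by norm_num : (0:ℝ) ≤ 1/2)
        (by norm_num)
      simp only [smul_eq_mul] at h3
      linarith
    have hm1ge : f p ≤ f ((1/2 : ℝ) • p + (1/2 : ℝ) • q) :=
      hpmin _ hm1C (interior_subset hm1I)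
    have hpm1 : p ≠ (1/2 : ℝ) • p + (1/2 : ℝ) • q := by
      intro h
      apply hqp
      have h4 : (2:ℝ) • p = (2:ℝ) • ((1/2 : ℝ) • p + (1/2 : ℝ) • q) := by rw [← h]
      have h5 : (2:ℝ) • ((1/2 : ℝ) • p + (1/2 : ℝ) • q) = p + q := by
        match_scalars <;> ring
      rw [h5, two_smul] at h4
      exact (add_left_cancel h4).symm
    have hstr := fstrict.2 hpI hm1I hpm1 (by norm_num : (0:ℝ) < 1/2)
      (by norm_num : (0:ℝ) < 1/2) (by norm_num)
    simp only [smul_eq_mul] at hstr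
    have hm2C : (1/2 : ℝ) • p + (1/2 : ℝ) • ((1/2 : ℝ) • p + (1/2 : ℝ) • q) ∈ C :=
      hCconv hpC hm1C (by norm_num) (by norm_num) (by norm_num)
    have hm2S : (1/2 : ℝ) • p + (1/2 : ℝ) • ((1/2 : ℝ) • p + (1/2 : ℝ) • q) ∈ S :=
      hSconv hpS (interior_subset hm1I) (by norm_num) (by norm_num) (by norm_num)
    have h6 := hpmin _ hm2C hm2S
    linarith
  refine ⟨p, ⟨⟨hpC, hpI⟩, fun x hx => ?_⟩, fun x hx => hcontr x hx.1 hx.2, hVI, huniq⟩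
  have h1 := hpmin x hx.1 hx.2
  have h2 := hbf p x
  linarith
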